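/- For every prime p and all integers h, n ≥ 1 there exists an integer t ≥ 0, depending only on p, h and n, with the following property. Let S be a commutative ℤ_p-algebra in which p is a non-zero-divisor (equivalently, a flat ℤ_p-algebra). Let (A₁,B₁) and (A₂,B₂) be p^n-isogeny pairs of h×h matrices over S, let m ≥ t be an integer, and let g be an invertible h×h matrix over S such that g·A₁ ≡ A₂ modulo p^m and B₁·g⁻¹ ≡ B₂ modulo p^m. Then there exists a unique invertible h×h matrix g̃ over S such that g̃·A₁ = A₂ and B₁·g̃⁻¹ = B₂. -/
import Mathlib


/-- Rigidity of `p^n`-isogeny pairs of matrices: there is a constant `t`, depending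
only on `p`, `h`, `n`, such that over any flat `ℤ_p`-algebra `S`, an invertible matrix
`g` intertwining two `p^n`-isogeny pairs modulo `p^m` with `m ≥ t` can be corrected to a
unique invertible matrix intertwining them exactly. -/
theorem stmt_1 (p : ℕ) [Fact p.Prime] (h n : ℕ) (hh : 1 ≤ h) (hn : 1 ≤ n) :
    ∃ t : ℕ, ∀ (S : Type) [CommRing S] [Algebra ℤ_[p] S],
      (p : S) ∈ nonZeroDivisors S →
      ∀ A₁ B₁ A₂ B₂ : Matrix (Fin h) (Fin h) S,
        A₁ * B₁ = (p : S) ^ n • (1 : Matrix (Fin h) (Fin h) S) →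
        B₁ * A₁ = (p : S) ^ n • (1 : Matrix (Fin h) (Fin h) S) →
        A₂ * B₂ = (p : S) ^ n • (1 : Matrix (Fin h) (Fin h) S) →
        B₂ * A₂ = (p : S) ^ n • (1 : Matrix (Fin h) (Fin h) S) →
        ∀ m : ℕ, t ≤ m →
        ∀ g : (Matrix (Fin h) (Fin h) S)ˣ,
          (∃ C : Matrix (Fin h) (Fin h) S,
            (g : Matrix (Fin h) (Fin h) S) * A₁ - A₂ = (p : S) ^ m • C) →
          (∃ C : Matrix (Fin h) (Fin h) S,
            B₁ * ((g⁻¹ : (Matrix (Fin h) (Fin h) S)ˣ) : Matrix (Fin h) (Fin h) S) - B₂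
              = (p : S) ^ m • C) →
          ∃! gt : (Matrix (Fin h) (Fin h) S)ˣ,
            (gt : Matrix (Fin h) (Fin h) S) * A₁ = A₂ ∧
            B₁ * ((gt⁻¹ : (Matrix (Fin h) (Fin h) S)ˣ) : Matrix (Fin h) (Fin h) S) = B₂ := by
  refine ⟨n, ?_⟩
  intro S _ _ hp A₁ B₁ A₂ B₂ hAB₁ hBA₁ hAB₂ hBA₂ m hm g hgA hgB
  obtain ⟨C, hC⟩ := hgA
  obtain ⟨D, hD⟩ := hgB
  have hpn : ((p : S) ^ n) ∈ nonZeroDivisors S := pow_mem hp n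
  -- cancellation of p^n • on matrices
  have cancel : ∀ M N : Matrix (Fin h) (Fin h) S,
      (p : S) ^ n • M = (p : S) ^ n • N → M = N := by
    intro M N hMN
    ext i j
    have := congrFun (congrFun hMN i) j
    simp only [Matrix.smul_apply, smul_eq_mul] at this
    exact (mul_cancel_left_mem_nonZeroDivisors hpn).mp this
  have hpm : ((p : S) ^ m) = (p : S) ^ n * (p : S) ^ (m - n) := by
    rw [← pow_add]
    congr 1
    omega
  set gt : Matrix (Fin h) (Fin h) S :=
    (g : Matrix (Fin h) (Fin h) S) - (p : S) ^ (m - n) • (C * B₁) with hgt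
  set st : Matrix (Fin h) (Fin h) S :=
    ((g⁻¹ : (Matrix (Fin h) (Fin h) S)ˣ) : Matrix (Fin h) (Fin h) S)
      - (p : S) ^ (m - n) • (A₁ * D) with hst
  have hA2 : A₂ = (g : Matrix (Fin h) (Fin h) S) * A₁ - (p : S) ^ m • C := by
    rw [← hC, sub_sub_cancel]
  have hB2 : B₂ = B₁ * ((g⁻¹ : (Matrix (Fin h) (Fin h) S)ˣ) : Matrix (Fin h) (Fin h) S)
      - (p : S) ^ m • D := by
    rw [← hD, sub_sub_cancel]
  have key1 : A₂ * B₁ = (p : S) ^ n • gt := by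
    rw [hA2, hgt, Matrix.sub_mul, Matrix.mul_assoc, hAB₁, Matrix.mul_smul,
      Matrix.mul_one, Matrix.smul_mul, hpm, mul_smul, smul_sub]
  have key2 : A₁ * B₂ = (p : S) ^ n • st := by
    rw [hB2, hst, Matrix.mul_sub, ← Matrix.mul_assoc, hAB₁, Matrix.smul_mul,
      Matrix.one_mul, Matrix.mul_smul, hpm, mul_smul, smul_sub]
  -- gt * A₁ = A₂
  have hgtA : gt * A₁ = A₂ := by
    apply cancel
    rw [← Matrix.smul_mul, ← key1, Matrix.mul_assoc, hBA₁, Matrix.mul_smul, Matrix.mul_one]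
  -- B₁ * st = B₂
  have hBst : B₁ * st = B₂ := by
    apply cancel
    rw [← Matrix.mul_smul, ← key2, ← Matrix.mul_assoc, hBA₁, Matrix.smul_mul, Matrix.one_mul]
  have hmul1 : gt * st = 1 := by
    apply cancel
    apply cancel
    calc (p : S) ^ n • ((p : S) ^ n • (gt * st))
        = ((p : S) ^ n • gt) * ((p : S) ^ n • st) := by
          rw [Matrix.smul_mul, Matrix.mul_smul]
      _ = (A₂ * B₁) * (A₁ * B₂) := by rw [key1, key2]
      _ = A₂ * (B₁ * A₁) * B₂ := by rw [Matrix.mul_assoc, Matrix.mul_assoc, Matrix.mul_assoc]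
      _ = (p : S) ^ n • (A₂ * B₂) := by
          rw [hBA₁, Matrix.mul_smul, Matrix.mul_one, Matrix.smul_mul]
      _ = (p : S) ^ n • ((p : S) ^ n • (1 : Matrix (Fin h) (Fin h) S)) := by rw [hAB₂]
  have hmul2 : st * gt = 1 := by
    apply cancel
    apply cancel
    calc (p : S) ^ n • ((p : S) ^ n • (st * gt))
        = ((p : S) ^ n • st) * ((p : S) ^ n • gt) := by
          rw [Matrix.smul_mul, Matrix.mul_smul]
      _ = (A₁ * B₂) * (A₂ * B₁) := by rw [key1, key2]
      _ = A₁ * (B₂ * A₂) * B₁ := by rw [Matrix.mul_assoc, Matrix.mul_assoc, Matrix.mul_assoc]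
      _ = (p : S) ^ n • (A₁ * B₁) := by
          rw [hBA₂, Matrix.mul_smul, Matrix.mul_one, Matrix.smul_mul]
      _ = (p : S) ^ n • ((p : S) ^ n • (1 : Matrix (Fin h) (Fin h) S)) := by rw [hAB₁]
  refine ⟨⟨gt, st, hmul1, hmul2⟩, ⟨hgtA, hBst⟩, ?_⟩
  rintro g' ⟨hg'A, -⟩
  apply Units.ext
  apply cancel
  calc (p : S) ^ n • (g' : Matrix (Fin h) (Fin h) S)
      = (g' : Matrix (Fin h) (Fin h) S) * ((p : S) ^ n • 1) := by
        rw [Matrix.mul_smul, Matrix.mul_one]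
    _ = (g' : Matrix (Fin h) (Fin h) S) * (A₁ * B₁) := by rw [hAB₁]
    _ = A₂ * B₁ := by rw [← Matrix.mul_assoc, hg'A]
    _ = (p : S) ^ n • gt := key1
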